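/- Let μ : 𝒳 → [0,1] be measurable with sup_{x ∈ 𝒳} |μ(x) − μ_0(x)| ≤ s, and let E denote the event { μ_0(X) ≥ 1/2 > μ(X) }. If P(E) > 0, then | P(Y = 1 ∣ E) − 1/2 | ≤ s. -/

import Mathlib

open MeasureTheory ProbabilityTheory

/-- If `sup_x |μ(x) − μ0(x)| ≤ s` and `E = {μ0(X) ≥ 1/2 > μ(X)}` has positive probability,
then `|P(Y = 1 ∣ E) − 1/2| ≤ s`. -/
theorem stmt6 {Ω 𝒳 : Type*} [MeasurableSpace Ω] [MeasurableSpace 𝒳]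
    (P : Measure Ω) [IsProbabilityMeasure P]
    (X : Ω → 𝒳) (hX : Measurable X)
    (Y : Ω → ℝ) (hY : Measurable Y) (hY01 : ∀ ω, Y ω = 0 ∨ Y ω = 1)
    (μ0 : 𝒳 → ℝ) (hμ0 : Measurable μ0) (hμ0mem : ∀ x, μ0 x ∈ Set.Icc (0 : ℝ) 1)
    (hcond : (fun ω => μ0 (X ω)) =ᵐ[P] P[Y | MeasurableSpace.comap X inferInstance])
    (μ : 𝒳 → ℝ) (hμ : Measurable μ) (hμmem : ∀ x, μ x ∈ Set.Icc (0 : ℝ) 1)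
    (s : ℝ) (hs : ∀ x, |μ x - μ0 x| ≤ s)
    (E : Set Ω) (hE : E = {ω | 1 / 2 ≤ μ0 (X ω) ∧ μ (X ω) < 1 / 2})
    (hEpos : 0 < P E) :
    |(P[|E] {ω | Y ω = 1}).toReal - 1 / 2| ≤ s := by
  have hmle : MeasurableSpace.comap X inferInstance ≤ ‹MeasurableSpace Ω› := hX.comap_le
  have hS : MeasurableSet {x : 𝒳 | 1 / 2 ≤ μ0 x ∧ μ x < 1 / 2} :=
    (measurableSet_le measurable_const hμ0).inter (measurableSet_lt hμ measurable_const)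
  have hEm : MeasurableSet[MeasurableSpace.comap X inferInstance] E := ⟨_, hS, by rw [hE]; rfl⟩
  have hEmeas : MeasurableSet E := hmle _ hEm
  obtain ⟨ω0, -⟩ : E.Nonempty := nonempty_of_measure_ne_zero hEpos.ne'
  have hsnn : 0 ≤ s := le_trans (abs_nonneg _) (hs (X ω0))
  have hYint : Integrable Y P := by
    refine (integrable_const (1 : ℝ)).mono' hY.aestronglyMeasurable ?_
    filter_upwards with ω
    rcases hY01 ω with h | h <;> simp [h]
  have hY1 : MeasurableSet {ω | Y ω = 1} := hY (measurableSet_singleton 1)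
  -- integral of Y over E is the measure of E ∩ {Y = 1}
  have hIY : ∫ ω in E, Y ω ∂P = (P (E ∩ {ω | Y ω = 1})).toReal := by
    have : ∀ ω, Y ω = Set.indicator {ω | Y ω = 1} (fun _ => (1 : ℝ)) ω := by
      intro ω
      rcases hY01 ω with h | h <;> simp [Set.indicator_apply, h, Set.mem_setOf_eq]
    calc ∫ ω in E, Y ω ∂P = ∫ ω in E, Set.indicator {ω | Y ω = 1} (fun _ => (1 : ℝ)) ω ∂P := by
          exact integral_congr_ae (Filter.Eventually.of_forall fun ω => this ω)
      _ = ∫ _ in E ∩ {ω | Y ω = 1}, (1 : ℝ) ∂P := by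
          rw [setIntegral_indicator hY1]
      _ = (P (E ∩ {ω | Y ω = 1})).toReal := by simp [Measure.real]
  -- integral of Y over E equals integral of μ0 ∘ X over E
  have hIμ0 : ∫ ω in E, Y ω ∂P = ∫ ω in E, μ0 (X ω) ∂P := by
    rw [← setIntegral_condExp hmle hYint hEm]
    exact (setIntegral_congr_ae hEmeas (hcond.mono fun ω h _ => h)).symm
  -- bounds for μ0 ∘ X on E
  have hlb : ∀ ω ∈ E, (1 / 2 : ℝ) ≤ μ0 (X ω) := by
    intro ω hω; rw [hE] at hω; exact hω.1
  have hub : ∀ ω ∈ E, μ0 (X ω) ≤ 1 / 2 + s := by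
    intro ω hω; rw [hE] at hω
    have := hs (X ω)
    have := abs_le.1 this
    linarith [hω.2, this.1]
  have hμ0int : IntegrableOn (fun ω => μ0 (X ω)) E P := by
    refine ((integrable_const (1 : ℝ)).mono' ((hμ0.comp hX).aestronglyMeasurable) ?_).integrableOn
    filter_upwards with ω
    rw [Real.norm_eq_abs, abs_le]
    simp only [Function.comp_apply]
    exact ⟨by linarith [(hμ0mem (X ω)).1], (hμ0mem (X ω)).2⟩
  have hc0 : (0 : ℝ) < (P E).toReal :=
    ENNReal.toReal_pos hEpos.ne' (measure_ne_top P E)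
  have hIlb : (P E).toReal * (1 / 2) ≤ ∫ ω in E, μ0 (X ω) ∂P := by
    have := setIntegral_mono_on (integrableOn_const (measure_ne_top P E))
      hμ0int hEmeas hlb
    simpa [Measure.real] using this
  have hIub : ∫ ω in E, μ0 (X ω) ∂P ≤ (P E).toReal * (1 / 2 + s) := by
    have := setIntegral_mono_on hμ0int
      (integrableOn_const (measure_ne_top P E)) hEmeas hub
    simpa [Measure.real] using this
  have hcond_apply : P[|E] {ω | Y ω = 1} = (P E)⁻¹ * P (E ∩ {ω | Y ω = 1}) :=
    cond_apply hEmeas P {ω | Y ω = 1}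
  have htoReal : (P[|E] {ω | Y ω = 1}).toReal
      = (P (E ∩ {ω | Y ω = 1})).toReal / (P E).toReal := by
    rw [hcond_apply, ENNReal.toReal_mul, ENNReal.toReal_inv]
    ring
  rw [htoReal, ← hIY, hIμ0]
  set I := ∫ ω in E, μ0 (X ω) ∂P
  rw [abs_le]
  constructor
  · have : (1 / 2 : ℝ) ≤ I / (P E).toReal := (le_div_iff₀ hc0).2 (by linarith)
    linarith
  · have : I / (P E).toReal ≤ 1 / 2 + s := (div_le_iff₀ hc0).2 (by linarith)
    linarith
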